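/- arXiv:2503.22601 — 6 statements merged into one kernel-verified Lean document; each statement's English description precedes it below -/
import Mathlib

section
/- Let Υ be a causal operator mapping ℝ^d-valued signals to ℝ^d-valued signals such that the operator Υ° := Υ − I is strictly causal, where I is the identity operator. Then there exists a unique operator Ψ mapping ℝ^d-valued signals to ℝ^d-valued signals such that Υ(Ψ(a)) = a and Ψ(Υ(b)) = b for all signals a, b; moreover Ψ is causal, and for every signal a the sequence b := Ψ(a) is the unique signal satisfying b_t = a_t − Υ°(b)_t for all t ∈ ℕ. -/
/-- A signal in `ℝ^d` is a function `ℕ → ℝ^d`. -/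
abbrev Signal (d : ℕ) := ℕ → EuclideanSpace ℝ (Fin d)

/-- An operator is causal if its output at time `t` depends only on inputs up to time `t`. -/
def Causal {d₁ d₂ : ℕ} (Υ : Signal d₁ → Signal d₂) : Prop :=
  ∀ (x z : Signal d₁) (t : ℕ), (∀ s ≤ t, x s = z s) → Υ x t = Υ z t

/-- An operator is strictly causal if its output at time `t` depends only on inputs
up to time `t - 1`. -/
def StrictlyCausal {d₁ d₂ : ℕ} (Υ : Signal d₁ → Signal d₂) : Prop :=
  ∀ (x z : Signal d₁) (t : ℕ), (∀ s < t, x s = z s) → Υ x t = Υ z t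

/-- Finite approximations to the fixed point `b = a - Υ°(b)`. -/
noncomputable def approxAux {d : ℕ} (Υo : Signal d → Signal d) (a : Signal d) : ℕ → Signal d
  | 0 => fun _ => 0
  | n + 1 => fun t => a t - Υo (approxAux Υo a n) t

/-- The candidate inverse. -/
noncomputable def psiAux {d : ℕ} (Υo : Signal d → Signal d) (a : Signal d) : Signal d :=
  fun t => approxAux Υo a (t + 1) t

lemma approxAux_eq {d : ℕ} (Υo : Signal d → Signal d) (h : StrictlyCausal Υo)
    (a : Signal d) : ∀ t n, t < n → approxAux Υo a n t = psiAux Υo a t := by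
  intro t
  induction t using Nat.strong_induction_on with
  | _ t ih =>
    intro n hn
    obtain ⟨k, rfl⟩ : ∃ k, n = k + 1 := ⟨n - 1, by omega⟩
    show a t - Υo (approxAux Υo a k) t = a t - Υo (approxAux Υo a t) t
    congr 1
    exact h _ _ t fun s hs => by rw [ih s hs k (by omega), ih s hs t hs]

lemma psiAux_fix {d : ℕ} (Υo : Signal d → Signal d) (h : StrictlyCausal Υo)
    (a : Signal d) (t : ℕ) : psiAux Υo a t = a t - Υo (psiAux Υo a) t := by
  show a t - Υo (approxAux Υo a t) t = a t - Υo (psiAux Υo a) t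
  congr 1
  exact h _ _ t fun s hs => approxAux_eq Υo h a s t hs

lemma psiAux_unique {d : ℕ} (Υo : Signal d → Signal d) (h : StrictlyCausal Υo)
    (a b : Signal d) (hb : ∀ t, b t = a t - Υo b t) : b = psiAux Υo a := by
  funext t
  induction t using Nat.strong_induction_on with
  | _ t ih =>
    rw [hb t, psiAux_fix Υo h a t]
    congr 1
    exact h _ _ t fun s hs => ih s hs

/-- If `Υ` is causal and `Υ° := Υ − I` is strictly causal, then `Υ` has a unique two-sided
inverse `Ψ`; moreover `Ψ` is causal and for every `a`, `b := Ψ(a)` is the unique signal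
satisfying `b_t = a_t − Υ°(b)_t` for all `t`. -/
theorem exists_unique_causal_inverse {d : ℕ} (Υ : Signal d → Signal d)
    (hΥ : Causal Υ) (hΥo : StrictlyCausal (fun x => Υ x - x)) :
    ∃ Ψ : Signal d → Signal d,
      (∀ a, Υ (Ψ a) = a) ∧ (∀ b, Ψ (Υ b) = b) ∧
      (∀ Ψ' : Signal d → Signal d,
        ((∀ a, Υ (Ψ' a) = a) ∧ (∀ b, Ψ' (Υ b) = b)) → Ψ' = Ψ) ∧
      Causal Ψ ∧
      (∀ a : Signal d,
        (∀ t, Ψ a t = a t - (Υ (Ψ a) t - Ψ a t)) ∧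
        (∀ b : Signal d, (∀ t, b t = a t - (Υ b t - b t)) → b = Ψ a)) := by
  set Υo : Signal d → Signal d := fun x => Υ x - x with hΥodef
  refine ⟨psiAux Υo, ?_, ?_, ?_, ?_, ?_⟩
  · -- right inverse
    intro a
    funext t
    have h : psiAux Υo a t = a t - (Υ (psiAux Υo a) t - psiAux Υo a t) :=
      psiAux_fix Υo hΥo a t
    have h3 : Υ (psiAux Υo a) t - a t = 0 := by
      calc Υ (psiAux Υo a) t - a t
          = (psiAux Υo a t + (Υ (psiAux Υo a) t - psiAux Υo a t)) - a t := by abel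
        _ = (a t - (Υ (psiAux Υo a) t - psiAux Υo a t)
              + (Υ (psiAux Υo a) t - psiAux Υo a t)) - a t := by rw [← h]
        _ = 0 := by abel
    exact sub_eq_zero.mp h3
  · -- left inverse
    intro b
    have hb : ∀ t, b t = Υ b t - Υo b t := by
      intro t
      show b t = Υ b t - (Υ b t - b t)
      abel
    exact (psiAux_unique Υo hΥo (Υ b) b hb).symm
  · -- uniqueness of the inverse operator
    intro Ψ' ⟨h1, h2⟩
    funext a
    have hright : ∀ a, Υ (psiAux Υo a) = a := by
      intro a
      funext t
      have h : psiAux Υo a t = a t - (Υ (psiAux Υo a) t - psiAux Υo a t) :=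
        psiAux_fix Υo hΥo a t
      have h3 : Υ (psiAux Υo a) t - a t = 0 := by
        calc Υ (psiAux Υo a) t - a t
            = (psiAux Υo a t + (Υ (psiAux Υo a) t - psiAux Υo a t)) - a t := by abel
          _ = (a t - (Υ (psiAux Υo a) t - psiAux Υo a t)
                + (Υ (psiAux Υo a) t - psiAux Υo a t)) - a t := by rw [← h]
          _ = 0 := by abel
      exact sub_eq_zero.mp h3
    calc Ψ' a = Ψ' (Υ (psiAux Υo a)) := by rw [hright a]
      _ = psiAux Υo a := h2 _
  · -- causality
    intro a a' t
    induction t using Nat.strong_induction_on with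
    | _ t ih =>
      intro hagree
      rw [psiAux_fix Υo hΥo a t, psiAux_fix Υo hΥo a' t, hagree t le_rfl]
      congr 1
      exact hΥo _ _ t fun s hs => ih s hs (fun r hr => hagree r (hr.trans hs.le))
  · -- the fixed-point characterization
    intro a
    constructor
    · intro t
      exact psiAux_fix Υo hΥo a t
    · intro b hb
      exact psiAux_unique Υo hΥo a b hb
end

section
/- Fix a real number p with 1 ≤ p < ∞. Let K be a causal operator mapping ℝ^{d_y}-valued signals to ℝ^{d_u}-valued signals that is incrementally L_p-stable with gain γ ≥ 0, and let Ŝ be a strictly causal L_p-stable operator mapping ℝ^{d_u}-valued signals to ℝ^{d_y}-valued signals. Suppose r, ω are ℝ^{d_u}-valued signals with r ∈ ℓ_p and ω ∈ ℓ_p, v is an ℝ^{d_y}-valued signal with v ∈ ℓ_p, and ω satisfies the fixed-point equation ω = r + K(Ŝ(ω) + v) − K(Ŝ(ω)). Then ‖ω‖_p ≤ ‖r‖_p + γ‖v‖_p. -/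
/-- A signal belongs to `ℓ_p` if `∑ₜ ‖x t‖ ^ p < ∞`. -/
def MemLp (p : ℝ) {d : ℕ} (x : Signal d) : Prop :=
  Summable fun t => ‖x t‖ ^ p

/-- The `ℓ_p`-norm of a signal: `(∑ₜ ‖x t‖ ^ p) ^ (1/p)`. -/
noncomputable def lpNorm (p : ℝ) {d : ℕ} (x : Signal d) : ℝ :=
  (∑' t, ‖x t‖ ^ p) ^ (1 / p)

/-- An operator is `L_p`-stable if it maps `ℓ_p` signals to `ℓ_p` signals. -/
def LpStable (p : ℝ) {d₁ d₂ : ℕ} (Υ : Signal d₁ → Signal d₂) : Prop :=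
  ∀ x : Signal d₁, MemLp p x → MemLp p (Υ x)

/-- An operator is incrementally `L_p`-stable with gain `γ` if
`‖Υ(x₁) − Υ(x₂)‖_p ≤ γ ‖x₁ − x₂‖_p` for all `x₁, x₂ ∈ ℓ_p`. -/
def IncLpStable (p : ℝ) (γ : ℝ) {d₁ d₂ : ℕ} (Υ : Signal d₁ → Signal d₂) : Prop :=
  ∀ x₁ x₂ : Signal d₁, MemLp p x₁ → MemLp p x₂ →
    lpNorm p (Υ x₁ - Υ x₂) ≤ γ * lpNorm p (x₁ - x₂)

lemma toReal_ofReal' {p : ℝ} (hp : 1 ≤ p) : (ENNReal.ofReal p).toReal = p :=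
  ENNReal.toReal_ofReal (by linarith)

lemma memℓp_iff_memLp {d : ℕ} {p : ℝ} (hp : 1 ≤ p) (x : Signal d) :
    Memℓp x (ENNReal.ofReal p) ↔ MemLp p x := by
  rw [memℓp_gen_iff (by rw [toReal_ofReal' hp]; linarith), toReal_ofReal' hp]; rfl

lemma lpNorm_eq' {d : ℕ} {p : ℝ} (hp : 1 ≤ p) (x : Signal d)
    (f : lp (fun _ : ℕ => EuclideanSpace ℝ (Fin d)) (ENNReal.ofReal p)) (hf : ⇑f = x) :
    lpNorm p x = ‖f‖ := by
  rw [lp.norm_eq_tsum_rpow (by rw [toReal_ofReal' hp]; linarith) f, toReal_ofReal' hp, ← hf]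
  rfl

lemma lpNorm_add_le {d : ℕ} {p : ℝ} (hp : 1 ≤ p) (x y : Signal d)
    (hx : MemLp p x) (hy : MemLp p y) :
    lpNorm p (x + y) ≤ lpNorm p x + lpNorm p y := by
  haveI : Fact (1 ≤ ENNReal.ofReal p) := ⟨ENNReal.one_le_ofReal.2 hp⟩
  set X : lp (fun _ : ℕ => EuclideanSpace ℝ (Fin d)) (ENNReal.ofReal p) :=
    ⟨x, (memℓp_iff_memLp hp x).2 hx⟩ with hX
  set Y : lp (fun _ : ℕ => EuclideanSpace ℝ (Fin d)) (ENNReal.ofReal p) :=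
    ⟨y, (memℓp_iff_memLp hp y).2 hy⟩ with hY
  have e1 : lpNorm p x = ‖X‖ := lpNorm_eq' hp x X rfl
  have e2 : lpNorm p y = ‖Y‖ := lpNorm_eq' hp y Y rfl
  have e3 : lpNorm p (x + y) = ‖X + Y‖ :=
    lpNorm_eq' hp (x + y) (X + Y) (by rw [lp.coeFn_add])
  rw [e1, e2, e3]
  exact norm_add_le X Y

/-- If `K` is causal and incrementally `L_p`-stable with gain `γ ≥ 0`, `Ŝ` (written `Shat`)
is strictly causal and `L_p`-stable, and `ω ∈ ℓ_p` satisfies the fixed-point equation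
`ω = r + K(Ŝ(ω) + v) − K(Ŝ(ω))` with `r, v ∈ ℓ_p`, then `‖ω‖_p ≤ ‖r‖_p + γ‖v‖_p`. -/
theorem ici_loop_signal_bound {du dy : ℕ} (p : ℝ) (hp : 1 ≤ p)
    (K : Signal dy → Signal du) (γ : ℝ) (hγ : 0 ≤ γ)
    (hKc : Causal K) (hKinc : IncLpStable p γ K)
    (Shat : Signal du → Signal dy)
    (hSsc : StrictlyCausal Shat) (hSlp : LpStable p Shat)
    (r ω : Signal du) (v : Signal dy)
    (hr : MemLp p r) (hω : MemLp p ω) (hv : MemLp p v)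
    (hfix : ω = r + (K (Shat ω + v) - K (Shat ω))) :
    lpNorm p ω ≤ lpNorm p r + γ * lpNorm p v := by
  have hS : MemLp p (Shat ω) := hSlp ω hω
  have hSv : MemLp p (Shat ω + v) := by
    rw [← memℓp_iff_memLp hp]
    exact ((memℓp_iff_memLp hp _).2 hS).add ((memℓp_iff_memLp hp _).2 hv)
  have hd : MemLp p (K (Shat ω + v) - K (Shat ω)) := by
    have h : K (Shat ω + v) - K (Shat ω) = ω - r := by
      conv_rhs => rw [hfix]
      abel
    rw [h, ← memℓp_iff_memLp hp]
    exact ((memℓp_iff_memLp hp _).2 hω).sub ((memℓp_iff_memLp hp _).2 hr)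
  have h1 : lpNorm p ω ≤ lpNorm p r + lpNorm p (K (Shat ω + v) - K (Shat ω)) := by
    have := lpNorm_add_le hp _ _ hr hd
    rwa [← hfix] at this
  have h2 := hKinc (Shat ω + v) (Shat ω) hSv hS
  have h3 : Shat ω + v - Shat ω = v := by abel
  rw [h3] at h2
  linarith
end

section
/- (Theorem 1, part T.1) Fix a real number p with 1 ≤ p < ∞. Let K be a causal, L_p-stable operator mapping ℝ^{d_y}-valued signals to ℝ^{d_u}-valued signals that is incrementally L_p-stable with gain γ ≥ 0, and let Ŝ be a strictly causal L_p-stable operator mapping ℝ^{d_u}-valued signals to ℝ^{d_y}-valued signals. Then for all signals r ∈ ℓ_p (ℝ^{d_u}-valued) and v ∈ ℓ_p (ℝ^{d_y}-valued), the unique signals û, ŷ°, ŷ satisfying ŷ° = Ŝ(û − K(ŷ°)), ŷ = ŷ° + v, and û = r + K(ŷ) satisfy û ∈ ℓ_p and ŷ ∈ ℓ_p; that is, the ICI model Ĝ defined by Ŝ and K is stabilized by K in the sense of closed-loop L_p-stability. -/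
private lemma aux_rpow_two_mul {p a b : ℝ} (hp : 1 ≤ p) (ha : 0 ≤ a) (hb : 0 ≤ b) :
    (a + b) ^ p ≤ 2 ^ p * (a ^ p + b ^ p) := by
  have hp0 : (0:ℝ) ≤ p := by linarith
  have h1 : a + b ≤ 2 * max a b := by
    rcases le_total a b with h | h
    · rw [max_eq_right h]; linarith
    · rw [max_eq_left h]; linarith
  have h2 : (a + b) ^ p ≤ (2 * max a b) ^ p :=
    Real.rpow_le_rpow (by positivity) h1 hp0
  have h3 : (2 * max a b : ℝ) ^ p = 2 ^ p * (max a b) ^ p :=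
    Real.mul_rpow (by norm_num) (le_max_of_le_left ha)
  have h4 : (max a b) ^ p ≤ a ^ p + b ^ p := by
    rcases le_total a b with h | h
    · rw [max_eq_right h]
      have : (0:ℝ) ≤ a ^ p := Real.rpow_nonneg ha p
      linarith
    · rw [max_eq_left h]
      have : (0:ℝ) ≤ b ^ p := Real.rpow_nonneg hb p
      linarith
  calc (a + b) ^ p ≤ (2 * max a b) ^ p := h2
    _ = 2 ^ p * (max a b) ^ p := h3
    _ ≤ 2 ^ p * (a ^ p + b ^ p) := by
        apply mul_le_mul_of_nonneg_left h4 (by positivity)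

private lemma memLp_add' {d : ℕ} {p : ℝ} (hp : 1 ≤ p) {x y : Signal d}
    (hx : MemLp p x) (hy : MemLp p y) : MemLp p (x + y) := by
  unfold MemLp at *
  refine Summable.of_nonneg_of_le (fun t => Real.rpow_nonneg (norm_nonneg _) p)
    (fun t => ?_) ((hx.add hy).mul_left (2 ^ p))
  calc ‖(x + y) t‖ ^ p ≤ (‖x t‖ + ‖y t‖) ^ p := by
        apply Real.rpow_le_rpow (norm_nonneg _) ?_ (by linarith)
        simpa using norm_add_le (x t) (y t)
    _ ≤ 2 ^ p * (‖x t‖ ^ p + ‖y t‖ ^ p) :=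
        aux_rpow_two_mul hp (norm_nonneg _) (norm_nonneg _)

private lemma memLp_sub' {d : ℕ} {p : ℝ} (hp : 1 ≤ p) {x y : Signal d}
    (hx : MemLp p x) (hy : MemLp p y) : MemLp p (x - y) := by
  have hny : MemLp p (-y) := by
    unfold MemLp at *
    simpa using hy
  simpa [sub_eq_add_neg] using memLp_add' hp hx hny

private def trunc {d : ℕ} (x : Signal d) (T : ℕ) : Signal d :=
  fun t => if t ≤ T then x t else 0

private lemma memLp_trunc {d : ℕ} {p : ℝ} (hp : 1 ≤ p) (x : Signal d) (T : ℕ) :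
    MemLp p (trunc x T) := by
  apply summable_of_ne_finset_zero (s := Finset.range (T + 1))
  intro t ht
  have h : ¬ t ≤ T := by simpa [Finset.mem_range, Nat.lt_succ_iff] using ht
  simp [trunc, h, Real.zero_rpow (by positivity : p ≠ 0)]

private lemma lpNorm_rpow {d : ℕ} {p : ℝ} (hp : 1 ≤ p) (x : Signal d) :
    (lpNorm p x) ^ p = ∑' t, ‖x t‖ ^ p := by
  have hp0 : (0:ℝ) < p := by linarith
  have hnn : 0 ≤ ∑' t, ‖x t‖ ^ p :=
    tsum_nonneg fun t => Real.rpow_nonneg (norm_nonneg _) p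
  rw [lpNorm, ← Real.rpow_mul hnn, one_div_mul_cancel hp0.ne', Real.rpow_one]

/-- **Theorem 1, part T.1.** If `K` is causal, `L_p`-stable and incrementally `L_p`-stable
with gain `γ ≥ 0`, and `Ŝ` (written `Shat`) is strictly causal and `L_p`-stable, then the
ICI model built from `Ŝ` and `K` is stabilized by `K`: for all `r, v ∈ ℓ_p`, the closed-loop
signals `û, ŷ°, ŷ` satisfying `ŷ° = Ŝ(û − K(ŷ°))`, `ŷ = ŷ° + v`, `û = r + K(ŷ)` are in `ℓ_p`. -/
theorem ici_closedLoop_LpStable {du dy : ℕ} (p : ℝ) (hp : 1 ≤ p)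
    (K : Signal dy → Signal du) (γ : ℝ) (hγ : 0 ≤ γ)
    (hKc : Causal K) (hKlp : LpStable p K) (hKinc : IncLpStable p γ K)
    (Shat : Signal du → Signal dy)
    (hSsc : StrictlyCausal Shat) (hSlp : LpStable p Shat) :
    ∀ (r : Signal du) (v : Signal dy), MemLp p r → MemLp p v →
      ∀ (uhat : Signal du) (ycirc yhat : Signal dy),
        ycirc = Shat (uhat - K ycirc) → yhat = ycirc + v → uhat = r + K yhat →
        MemLp p uhat ∧ MemLp p yhat := by
  intro r v hr hv uhat ycirc yhat hyc hyh huh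
  have hp0 : (0:ℝ) < p := by linarith
  have hvnn : 0 ≤ ∑' t, ‖v t‖ ^ p :=
    tsum_nonneg fun t => Real.rpow_nonneg (norm_nonneg _) p
  -- truncations of yhat and ycirc differ by a truncation of v
  have hdiff : ∀ n : ℕ, trunc yhat n - trunc ycirc n = trunc v n := by
    intro n; funext t
    by_cases h : t ≤ n
    · simp [trunc, h, hyh]
    · simp [trunc, h]
  -- the key summability: K yhat - K ycirc is in ℓp
  have hDs : MemLp p (K yhat - K ycirc) := by
    refine summable_of_sum_range_le (c := γ ^ p * ∑' t, ‖v t‖ ^ p)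
      (fun t => Real.rpow_nonneg (norm_nonneg _) p) (fun n => ?_)
    have h1 : MemLp p (trunc yhat n) := memLp_trunc hp _ _
    have h2 : MemLp p (trunc ycirc n) := memLp_trunc hp _ _
    have hKd : MemLp p (K (trunc yhat n) - K (trunc ycirc n)) :=
      memLp_sub' hp (hKlp _ h1) (hKlp _ h2)
    have hinc := hKinc _ _ h1 h2
    rw [hdiff n] at hinc
    have hvt : lpNorm p (trunc v n) ≤ lpNorm p v := by
      unfold lpNorm
      apply Real.rpow_le_rpow
        (tsum_nonneg fun t => Real.rpow_nonneg (norm_nonneg _) p) ?_ (by positivity)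
      apply Summable.tsum_le_tsum ?_ (memLp_trunc hp v n) hv
      intro t
      by_cases h : t ≤ n
      · simp [trunc, h]
      · simp only [trunc, h, if_false, norm_zero]
        rw [Real.zero_rpow hp0.ne']
        exact Real.rpow_nonneg (norm_nonneg _) p
    have hbound : lpNorm p (K (trunc yhat n) - K (trunc ycirc n)) ≤ γ * lpNorm p v :=
      hinc.trans (mul_le_mul_of_nonneg_left hvt hγ)
    have hlnn : 0 ≤ lpNorm p (K (trunc yhat n) - K (trunc ycirc n)) := by
      unfold lpNorm
      exact Real.rpow_nonneg (tsum_nonneg fun t => Real.rpow_nonneg (norm_nonneg _) p) _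
    have hpow : (∑' t, ‖(K (trunc yhat n) - K (trunc ycirc n)) t‖ ^ p)
        ≤ γ ^ p * ∑' t, ‖v t‖ ^ p := by
      have h := Real.rpow_le_rpow hlnn hbound hp0.le
      rw [lpNorm_rpow hp, Real.mul_rpow hγ (by
        unfold lpNorm
        exact Real.rpow_nonneg (tsum_nonneg fun t => Real.rpow_nonneg (norm_nonneg _) p) _),
        lpNorm_rpow hp] at h
      exact h
    have hagree : ∀ t ∈ Finset.range n,
        ‖(K yhat - K ycirc) t‖ ^ p
          = ‖(K (trunc yhat n) - K (trunc ycirc n)) t‖ ^ p := by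
      intro t ht
      have htn : t ≤ n := le_of_lt (Finset.mem_range.mp ht)
      have e1 : K yhat t = K (trunc yhat n) t :=
        hKc _ _ t fun s hs => by simp [trunc, hs.trans htn]
      have e2 : K ycirc t = K (trunc ycirc n) t :=
        hKc _ _ t fun s hs => by simp [trunc, hs.trans htn]
      simp [e1, e2]
    calc ∑ t ∈ Finset.range n, ‖(K yhat - K ycirc) t‖ ^ p
        = ∑ t ∈ Finset.range n, ‖(K (trunc yhat n) - K (trunc ycirc n)) t‖ ^ p :=
          Finset.sum_congr rfl hagree
      _ ≤ ∑' t, ‖(K (trunc yhat n) - K (trunc ycirc n)) t‖ ^ p :=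
          Summable.sum_le_tsum _ (fun t _ => Real.rpow_nonneg (norm_nonneg _) p) hKd
      _ ≤ γ ^ p * ∑' t, ‖v t‖ ^ p := hpow
  -- the input to Shat is in ℓp
  have hz : MemLp p (uhat - K ycirc) := by
    have h : uhat - K ycirc = r + (K yhat - K ycirc) := by
      funext t
      simp only [Pi.sub_apply, Pi.add_apply, huh]
      abel
    rw [h]; exact memLp_add' hp hr hDs
  have hyc' : MemLp p ycirc := hyc ▸ hSlp _ hz
  have hyhat : MemLp p yhat := hyh ▸ memLp_add' hp hyc' hv
  have hu : MemLp p uhat := huh ▸ memLp_add' hp hr (hKlp _ hyhat)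
  exact ⟨hu, hyhat⟩
end

section
/- Let S be a strictly causal operator mapping ℝ^{d_u}-valued signals to ℝ^{d_y}-valued signals and K a causal operator mapping ℝ^{d_y}-valued signals to ℝ^{d_u}-valued signals, and define Ŝ := S ∘ (I − K∘S)^{-1}, where (I − K∘S)^{-1} is the causal two-sided inverse of I − K∘S. Then for every ℝ^{d_u}-valued signal û, the unique signal ŷ° satisfying the ICI interconnection equation ŷ° = Ŝ(û − K(ŷ°)) equals S(û); that is, the ICI model built from Ŝ and K coincides with S as an operator. -/
/-- Let `Ψ` be the causal two-sided inverse of `I − K∘S` and `Ŝ := S ∘ Ψ` (written `Shat`).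
Then for every input `û`, a signal `ŷ°` satisfies the ICI equation `ŷ° = Ŝ(û − K(ŷ°))`
if and only if `ŷ° = S(û)`; that is, the ICI model built from `Ŝ` and `K` coincides
with `S`. -/
theorem ici_model_recovers_S {du dy : ℕ}
    (S : Signal du → Signal dy) (K : Signal dy → Signal du)
    (hS : StrictlyCausal S) (hK : Causal K)
    (Ψ : Signal du → Signal du) (hΨc : Causal Ψ)
    (hΨr : ∀ a : Signal du, Ψ a - K (S (Ψ a)) = a)
    (hΨl : ∀ b : Signal du, Ψ (b - K (S b)) = b)
    (Shat : Signal du → Signal dy) (hShat : ∀ u, Shat u = S (Ψ u)) :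
    ∀ (uhat : Signal du) (ycirc : Signal dy),
      ycirc = Shat (uhat - K ycirc) ↔ ycirc = S uhat := by
  intro uhat ycirc
  constructor
  · intro h
    set b := Ψ (uhat - K ycirc) with hb
    have hy : ycirc = S b := by rw [h, hShat]
    have h1 : b - K (S b) = uhat - K ycirc := hΨr (uhat - K ycirc)
    rw [← hy] at h1
    have : b = uhat := sub_left_injective h1
    rw [hy, this]
  · intro h
    rw [h, hShat, hΨl]
end

section
/- (Theorem 1, part T.2) Fix a real number p with 1 ≤ p < ∞. Let K be a causal, L_p-stable operator mapping ℝ^{d_y}-valued signals to ℝ^{d_u}-valued signals that is incrementally L_p-stable, and let G be a strictly causal operator mapping ℝ^{d_u}-valued signals to ℝ^{d_y}-valued signals such that the closed loop of G and K is L_p-stable: for every r ∈ ℓ_p (ℝ^{d_u}-valued) and v ∈ ℓ_p (ℝ^{d_y}-valued), the unique signals u, y satisfying y = G(u) + v and u = r + K(y) belong to ℓ_p. Then there exists a strictly causal, L_p-stable operator Ŝ mapping ℝ^{d_u}-valued signals to ℝ^{d_y}-valued signals such that for every signal û, the unique ŷ° satisfying ŷ° = Ŝ(û − K(ŷ°))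 equals G(û). -/

noncomputable def Psi {du dy : ℕ} (K : Signal dy → Signal du) (G : Signal du → Signal dy)
    (w : Signal du) : ℕ → EuclideanSpace ℝ (Fin du)
  | t => w t + K (G (fun s => if h : s < t then Psi K G w s else 0)) t

lemma Psi_spec {du dy : ℕ} {K : Signal dy → Signal du} {G : Signal du → Signal dy}
    (hKc : Causal K) (hG : StrictlyCausal G) (w : Signal du) (t : ℕ) :
    Psi K G w t = w t + K (G (Psi K G w)) t := by
  rw [Psi]
  congr 1
  apply hKc
  intro s hs
  apply hG
  intro s' hs'
  simp only [dif_pos (lt_of_lt_of_le hs' hs)]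

lemma fixed_agree {du dy : ℕ} {K : Signal dy → Signal du} {G : Signal du → Signal dy}
    (hKc : Causal K) (hG : StrictlyCausal G)
    {w w' u u' : Signal du}
    (hu : ∀ t, u t = w t + K (G u) t) (hu' : ∀ t, u' t = w' t + K (G u') t) :
    ∀ s : ℕ, (∀ s' ≤ s, w s' = w' s') → u s = u' s := by
  intro s
  induction s using Nat.strong_induction_on with
  | _ s ih =>
    intro hw
    rw [hu s, hu' s, hw s le_rfl]
    congr 1
    apply hKc
    intro s₁ hs₁
    apply hG
    intro s₂ hs₂
    exact ih s₂ (lt_of_lt_of_le hs₂ hs₁)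
      (fun s' hs' => hw s' (le_trans hs' (le_trans (le_of_lt hs₂) hs₁)))

/-- **Theorem 1, part T.2.** If `K` is causal, `L_p`-stable, and incrementally `L_p`-stable,
and `G` is strictly causal with the closed loop of `G` and `K` being `L_p`-stable, then
there exists a strictly causal, `L_p`-stable operator `Ŝ` (written `Shat`) whose ICI model
with internal controller `K` coincides with `G`: for every `û`, the unique `ŷ°` with
`ŷ° = Ŝ(û − K(ŷ°))` equals `G(û)`. -/
theorem exists_ici_representation {du dy : ℕ} (p : ℝ) (hp : 1 ≤ p)
    (K : Signal dy → Signal du)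
    (hKc : Causal K) (hKlp : LpStable p K)
    (hKinc : ∃ γ : ℝ, 0 ≤ γ ∧ IncLpStable p γ K)
    (G : Signal du → Signal dy) (hG : StrictlyCausal G)
    (hCL : ∀ (r : Signal du) (v : Signal dy), MemLp p r → MemLp p v →
      ∀ (u : Signal du) (y : Signal dy),
        y = G u + v → u = r + K y → MemLp p u ∧ MemLp p y) :
    ∃ Shat : Signal du → Signal dy,
      StrictlyCausal Shat ∧ LpStable p Shat ∧
      ∀ (uhat : Signal du) (ycirc : Signal dy),
        ycirc = Shat (uhat - K ycirc) ↔ ycirc = G uhat := by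
  obtain ⟨γ, hγ, hKi⟩ := hKinc
  set Shat : Signal du → Signal dy := fun w => G (Psi K G w) with hS
  have hPsiEq : ∀ w : Signal du, ∀ t, Psi K G w t = w t + K (G (Psi K G w)) t :=
    fun w t => Psi_spec hKc hG w t
  refine ⟨Shat, ?_, ?_, ?_⟩
  · -- strictly causal
    intro x z t hxz
    apply hG
    intro s hs
    exact fixed_agree hKc hG (hPsiEq x) (hPsiEq z) s
      (fun s' hs' => hxz s' (lt_of_le_of_lt hs' hs))
  · -- Lp stable
    intro w hw
    have h0 : MemLp p (0 : Signal dy) := by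
      have : (fun t : ℕ => ‖(0 : Signal dy) t‖ ^ p) = fun _ => (0:ℝ) := by
        funext t
        simp [Real.zero_rpow (by linarith : p ≠ 0)]
      rw [MemLp, this]
      exact summable_zero
    have key := hCL w 0 hw h0 (Psi K G w) (G (Psi K G w)) ?_ ?_
    · exact key.2
    · funext t; simp
    · funext t
      rw [hPsiEq w t]
      simp
  · -- ICI characterization
    intro uhat ycirc
    constructor
    · intro h
      have hu : Psi K G (uhat - K ycirc) = uhat := by
        funext t
        have h' : ycirc = G (Psi K G (uhat - K ycirc)) := h
        rw [hPsiEq (uhat - K ycirc) t, ← h']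
        simp
      rw [h, hS]
      simp only [hu]
    · intro h
      have huhat : ∀ t, uhat t = (uhat - K ycirc) t + K (G uhat) t := by
        intro t
        rw [← h]
        simp
      have hu : Psi K G (uhat - K ycirc) = uhat := by
        funext t
        exact fixed_agree hKc hG (hPsiEq (uhat - K ycirc)) huhat t (fun _ _ => rfl)
      rw [hS]
      simp only [hu]
      exact h
end

section
/- Let Ŝ be a strictly causal, additive operator mapping ℝ^{d_u}-valued signals to ℝ^{d_y}-valued signals and K a causal, additive operator mapping ℝ^{d_y}-valued signals to ℝ^{d_u}-valued signals (additive meaning Υ(a + b) = Υ(a) + Υ(b) for all signals a, b, with addition of signals defined pointwise). For any ℝ^{d_u}-valued signal r and ℝ^{d_y}-valued signal v, if ŷ is a signal satisfying the noisy closed-loop equation ŷ = Ŝ(r + K(ŷ) − K(ŷ − v)) + v, then ŷ = Ŝ(r) + Ŝ(K(v)) + v. In particular, in the linear case the noisy closed-loop output of the ICI model equals Ŝ applied to the noise-independent excitation signal r plus an additive noise term Ŝ(K(v)) + v. -/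
/-- An operator is additive if `Υ(a + b) = Υ(a) + Υ(b)` for all signals `a`, `b`. -/
def AdditiveOp {d₁ d₂ : ℕ} (Υ : Signal d₁ → Signal d₂) : Prop :=
  ∀ a b : Signal d₁, Υ (a + b) = Υ a + Υ b

/-- In the additive (linear) case, the noisy closed-loop output of the ICI model equals
`Ŝ` applied to the noise-independent excitation `r`, plus the additive noise term
`Ŝ(K(v)) + v`: if `ŷ = Ŝ(r + K(ŷ) − K(ŷ − v)) + v`, then `ŷ = Ŝ(r) + Ŝ(K(v)) + v`. -/
theorem ici_additive_noise_separation {du dy : ℕ}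
    (Shat : Signal du → Signal dy) (K : Signal dy → Signal du)
    (hSsc : StrictlyCausal Shat) (hSadd : AdditiveOp Shat)
    (hKc : Causal K) (hKadd : AdditiveOp K)
    (r : Signal du) (v : Signal dy) (yhat : Signal dy)
    (h : yhat = Shat (r + K yhat - K (yhat - v)) + v) :
    yhat = Shat r + Shat (K v) + v := by
  have hK : K yhat = K (yhat - v) + K v := by
    have := hKadd (yhat - v) v
    rwa [sub_add_cancel] at this
  have h1 : r + K yhat - K (yhat - v) = r + K v := by
    rw [hK]; abel
  rw [h1, hSadd] at h
  exact h
end
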